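/- Any 4×4 matrix U which is a product of a list of matrices, each entry being X₀, X₁, a power of T₀ or T₁, CX₀₁, or CX₁₀, in which exactly three entries are CX₀₁ or CX₁₀, is phase-equivalent either to a matrix of the form X₀^k · X₁^{k'} · T₀^l · T₁^{l'} · CX₀₁ · CX₁₀ · T₁^{l''} · CX₀₁ with k, k' ∈ {0,1}, l, l' ∈ {0,…,m−1}, l'' ∈ {0,…,m/d−1}, or to a product with at most one CX gate. Moreover, the number of phase-equivalence classes of matrices of the displayed form equals 4m³/d. -/

import Mathlib

open Matrix Kronecker

noncomputable section

/-- ω = exp(2πi/m). -/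
def omega (m : ℕ) : ℂ := Complex.exp (2 * Real.pi * Complex.I / m)

/-- The bit-flip gate X = !![0,1;1,0]. -/
def Xg : Matrix (Fin 2) (Fin 2) ℂ := !![0, 1; 1, 0]

/-- The phase gate T = !![1,0;0,ω]. -/
def Tg (m : ℕ) : Matrix (Fin 2) (Fin 2) ℂ := !![1, 0; 0, omega m]

/-- The inverse phase gate T⁻¹ = !![1,0;0,ω⁻¹]. -/
def Tginv (m : ℕ) : Matrix (Fin 2) (Fin 2) ℂ := !![1, 0; 0, (omega m)⁻¹]

/-- The Kronecker product of two 2×2 matrices, as a 4×4 matrix. -/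
def kron (A B : Matrix (Fin 2) (Fin 2) ℂ) : Matrix (Fin 4) (Fin 4) ℂ :=
  Matrix.reindex finProdFinEquiv finProdFinEquiv (A ⊗ₖ B)

/-- The controlled-X gate with control qubit 0 and target qubit 1. -/
def CX01 : Matrix (Fin 4) (Fin 4) ℂ :=
  !![1, 0, 0, 0; 0, 1, 0, 0; 0, 0, 0, 1; 0, 0, 1, 0]

/-- The controlled-X gate with control qubit 1 and target qubit 0. -/
def CX10 : Matrix (Fin 4) (Fin 4) ℂ :=
  !![1, 0, 0, 0; 0, 0, 0, 1; 0, 0, 1, 0; 0, 1, 0, 0]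

/-- The controlled-S gate, the diagonal matrix with entries (1,1,1,ω²). -/
def CSg (m : ℕ) : Matrix (Fin 4) (Fin 4) ℂ :=
  Matrix.diagonal ![1, 1, 1, (omega m) ^ 2]

/-- The inverse controlled-S gate, the diagonal matrix with entries (1,1,1,ω⁻²). -/
def CSginv (m : ℕ) : Matrix (Fin 4) (Fin 4) ℂ :=
  Matrix.diagonal ![1, 1, 1, ((omega m) ^ 2)⁻¹]
/-- X₀ = X ⊗ 1. -/
def X0 : Matrix (Fin 4) (Fin 4) ℂ := kron Xg 1

/-- X₁ = 1 ⊗ X. -/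
def X1 : Matrix (Fin 4) (Fin 4) ℂ := kron 1 Xg

/-- T₀ = T ⊗ 1. -/
def T0 (m : ℕ) : Matrix (Fin 4) (Fin 4) ℂ := kron (Tg m) 1

/-- T₁ = 1 ⊗ T. -/
def T1 (m : ℕ) : Matrix (Fin 4) (Fin 4) ℂ := kron 1 (Tg m)

-- ### omega facts

lemma omega_ne (m : ℕ) : omega m ≠ 0 := Complex.exp_ne_zero _

lemma omega_prim (m : ℕ) (hm : 0 < m) : IsPrimitiveRoot (omega m) m :=
  Complex.isPrimitiveRoot_exp m hm.ne'

lemma zp {m : ℕ} (x y : ℤ) (h : x = y) : omega m ^ x = omega m ^ y := by rw [h]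

lemma omega_zpow_eq_iff {m : ℕ} (hm : 0 < m) {x y : ℤ} :
    omega m ^ x = omega m ^ y ↔ (m : ℤ) ∣ x - y := by
  rw [← (omega_prim m hm).zpow_eq_one_iff_dvd]
  rw [zpow_sub₀ (omega_ne m)]
  rw [div_eq_one_iff_eq (zpow_ne_zero _ (omega_ne m))]

-- ### The diagonal family

def Dm (m : ℕ) (a b c : ℤ) : Matrix (Fin 4) (Fin 4) ℂ :=
  Matrix.diagonal ![1, omega m ^ b, omega m ^ a, omega m ^ (a+b+2*c)]

variable {m : ℕ}

lemma Dm_congr {a b c a' b' c' : ℤ} (ha : omega m ^ a = omega m ^ a')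
    (hb : omega m ^ b = omega m ^ b') (hc : omega m ^ (2*c) = omega m ^ (2*c')) :
    Dm m a b c = Dm m a' b' c' := by
  unfold Dm
  refine congrArg _ (funext fun i => ?_)
  have h3 : omega m ^ (a + b + 2*c) = omega m ^ (a' + b' + 2*c') := by
    rw [zpow_add₀ (omega_ne m), zpow_add₀ (omega_ne m), ha, hb, hc,
      ← zpow_add₀ (omega_ne m), ← zpow_add₀ (omega_ne m)]
  fin_cases i <;> simp [Matrix.vecHead, Matrix.vecTail, ha, hb, h3]

lemma Dm_mul_Dm (a b c a' b' c' : ℤ) :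
    Dm m a b c * Dm m a' b' c' = Dm m (a+a') (b+b') (c+c') := by
  rw [Dm, Dm, Dm, Matrix.diagonal_mul_diagonal]
  refine congrArg _ (funext fun i => ?_)
  fin_cases i <;>
    simp [Matrix.vecHead, Matrix.vecTail, ← zpow_add₀ (omega_ne m)] <;>
    exact zp _ _ (by ring)

lemma Dm_zero : Dm m 0 0 0 = 1 := by
  unfold Dm
  rw [show (1 : Matrix (Fin 4) (Fin 4) ℂ) = Matrix.diagonal 1 from Matrix.diagonal_one.symm]
  refine congrArg _ (funext fun i => ?_)
  fin_cases i <;> simp [Matrix.vecHead, Matrix.vecTail]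

-- ### explicit forms

lemma kron_apply (A B : Matrix (Fin 2) (Fin 2) ℂ) (i j : Fin 4) :
    kron A B i j = A ((@finProdFinEquiv 2 2).symm i).1 ((@finProdFinEquiv 2 2).symm j).1 *
      B ((@finProdFinEquiv 2 2).symm i).2 ((@finProdFinEquiv 2 2).symm j).2 := rfl

lemma X0_eq : X0 = !![0,0,1,0;0,0,0,1;1,0,0,0;0,1,0,0] := by
  ext i j
  fin_cases i <;> fin_cases j <;>
    rw [show (X0 : Matrix (Fin 4) (Fin 4) ℂ) = kron Xg 1 from rfl, kron_apply] <;>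
    norm_num [Xg, finProdFinEquiv, Fin.divNat, Fin.modNat, Matrix.one_apply, Fin.ext_iff]

lemma X1_eq : X1 = !![0,1,0,0;1,0,0,0;0,0,0,1;0,0,1,0] := by
  ext i j
  fin_cases i <;> fin_cases j <;>
    rw [show (X1 : Matrix (Fin 4) (Fin 4) ℂ) = kron 1 Xg from rfl, kron_apply] <;>
    norm_num [Xg, finProdFinEquiv, Fin.divNat, Fin.modNat, Matrix.one_apply, Fin.ext_iff]

lemma T0_eq : T0 m = Dm m 1 0 0 := by
  have h : Dm m 1 0 0 = Matrix.diagonal ![1,1,omega m, omega m] := by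
    unfold Dm
    congr 1
    funext i
    fin_cases i <;> simp [Matrix.vecHead, Matrix.vecTail]
  rw [h]
  ext i j
  fin_cases i <;> fin_cases j <;>
    rw [show T0 m = kron (Tg m) 1 from rfl, kron_apply] <;>
    norm_num [Tg, finProdFinEquiv, Fin.divNat, Fin.modNat, Matrix.one_apply, Fin.ext_iff,
      Matrix.diagonal, Matrix.vecHead, Matrix.vecTail]

lemma T1_eq : T1 m = Dm m 0 1 0 := by
  have h : Dm m 0 1 0 = Matrix.diagonal ![1,omega m,1, omega m] := by
    unfold Dm
    congr 1
    funext i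
    fin_cases i <;> simp [Matrix.vecHead, Matrix.vecTail]
  rw [h]
  ext i j
  fin_cases i <;> fin_cases j <;>
    rw [show T1 m = kron 1 (Tg m) from rfl, kron_apply] <;>
    norm_num [Tg, finProdFinEquiv, Fin.divNat, Fin.modNat, Matrix.one_apply, Fin.ext_iff,
      Matrix.diagonal, Matrix.vecHead, Matrix.vecTail]

lemma T0_pow (l : ℕ) : T0 m ^ l = Dm m l 0 0 := by
  induction l with
  | zero => simp [Dm_zero]
  | succ n ih =>
      rw [pow_succ, ih, T0_eq, Dm_mul_Dm]
      exact Dm_congr (zp _ _ (by push_cast; ring)) rfl rfl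

lemma T1_pow (l : ℕ) : T1 m ^ l = Dm m 0 l 0 := by
  induction l with
  | zero => simp [Dm_zero]
  | succ n ih =>
      rw [pow_succ, ih, T1_eq, Dm_mul_Dm]
      exact Dm_congr rfl (zp _ _ (by push_cast; ring)) rfl

section PART2
variable {m : ℕ}

lemma X0_sq : X0 * X0 = 1 := by
  rw [X0_eq]
  ext i j
  fin_cases i <;> fin_cases j <;>
    simp [Matrix.mul_apply, Fin.sum_univ_four, Matrix.one_apply, Matrix.vecHead, Matrix.vecTail]

lemma X1_sq : X1 * X1 = 1 := by
  rw [X1_eq]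
  ext i j
  fin_cases i <;> fin_cases j <;>
    simp [Matrix.mul_apply, Fin.sum_univ_four, Matrix.one_apply, Matrix.vecHead, Matrix.vecTail]

lemma X1_mul_X0 : X1 * X0 = X0 * X1 := by
  rw [X0_eq, X1_eq]
  ext i j
  fin_cases i <;> fin_cases j <;>
    simp [Matrix.mul_apply, Fin.sum_univ_four, Matrix.vecHead, Matrix.vecTail]

lemma CX01_sq : CX01 * CX01 = 1 := by
  ext i j
  fin_cases i <;> fin_cases j <;>
    simp [CX01, Matrix.mul_apply, Fin.sum_univ_four, Matrix.one_apply,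
      Matrix.vecHead, Matrix.vecTail]

lemma CX10_sq : CX10 * CX10 = 1 := by
  ext i j
  fin_cases i <;> fin_cases j <;>
    simp [CX10, Matrix.mul_apply, Fin.sum_univ_four, Matrix.one_apply,
      Matrix.vecHead, Matrix.vecTail]

def SWAPm : Matrix (Fin 4) (Fin 4) ℂ := !![1,0,0,0;0,0,1,0;0,1,0,0;0,0,0,1]

lemma CX0110_eq : CX01 * CX10 = !![1,0,0,0;0,0,0,1;0,1,0,0;0,0,1,0] := by
  ext i j
  fin_cases i <;> fin_cases j <;>
    simp [CX01, CX10, Matrix.mul_apply, Fin.sum_univ_four, Matrix.vecHead, Matrix.vecTail]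

lemma CX1001_eq : CX10 * CX01 = !![1,0,0,0;0,0,1,0;0,0,0,1;0,1,0,0] := by
  ext i j
  fin_cases i <;> fin_cases j <;>
    simp [CX01, CX10, Matrix.mul_apply, Fin.sum_univ_four, Matrix.vecHead, Matrix.vecTail]

lemma CX01_braid : CX01 * (CX10 * CX01) = SWAPm := by
  rw [CX1001_eq]
  ext i j
  fin_cases i <;> fin_cases j <;>
    simp [CX01, SWAPm, Matrix.mul_apply, Fin.sum_univ_four, Matrix.vecHead, Matrix.vecTail]

lemma CX10_braid : CX10 * (CX01 * CX10) = SWAPm := by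
  rw [CX0110_eq]
  ext i j
  fin_cases i <;> fin_cases j <;>
    simp [CX10, SWAPm, Matrix.mul_apply, Fin.sum_univ_four, Matrix.vecHead, Matrix.vecTail]

lemma SWAP_sq : SWAPm * SWAPm = 1 := by
  ext i j
  fin_cases i <;> fin_cases j <;>
    simp [SWAPm, Matrix.mul_apply, Fin.sum_univ_four, Matrix.one_apply,
      Matrix.vecHead, Matrix.vecTail]

lemma X1_mul_CX01 : X1 * CX01 = !![0,1,0,0;1,0,0,0;0,0,1,0;0,0,0,1] := by
  rw [X1_eq]
  ext i j
  fin_cases i <;> fin_cases j <;>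
    simp [CX01, Matrix.mul_apply, Fin.sum_univ_four, Matrix.vecHead, Matrix.vecTail]

lemma CX01_mul_X0 : CX01 * X0 = X0 * (X1 * CX01) := by
  rw [X1_mul_CX01, X0_eq]
  ext i j
  fin_cases i <;> fin_cases j <;>
    simp [CX01, Matrix.mul_apply, Fin.sum_univ_four, Matrix.vecHead, Matrix.vecTail]

lemma CX01_mul_X1 : CX01 * X1 = X1 * CX01 := by
  rw [X1_eq]
  ext i j
  fin_cases i <;> fin_cases j <;>
    simp [CX01, Matrix.mul_apply, Fin.sum_univ_four, Matrix.vecHead, Matrix.vecTail]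

lemma CX10_mul_X0 : CX10 * X0 = X0 * CX10 := by
  rw [X0_eq]
  ext i j
  fin_cases i <;> fin_cases j <;>
    simp [CX10, Matrix.mul_apply, Fin.sum_univ_four, Matrix.vecHead, Matrix.vecTail]

lemma X1_mul_CX10 : X1 * CX10 = !![0,0,0,1;1,0,0,0;0,1,0,0;0,0,1,0] := by
  rw [X1_eq]
  ext i j
  fin_cases i <;> fin_cases j <;>
    simp [CX10, Matrix.mul_apply, Fin.sum_univ_four, Matrix.vecHead, Matrix.vecTail]

lemma CX10_mul_X1 : CX10 * X1 = X0 * (X1 * CX10) := by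
  rw [X1_mul_CX10, X0_eq, X1_eq]
  ext i j
  fin_cases i <;> fin_cases j <;>
    simp [CX10, Matrix.mul_apply, Fin.sum_univ_four, Matrix.vecHead, Matrix.vecTail]

lemma CX01_mul_Dm (a b c : ℤ) :
    CX01 * Dm m a b c = Dm m (a+b+2*c) b (-b-c) * CX01 := by
  ext i j
  rw [Dm, Dm, Matrix.mul_diagonal, Matrix.diagonal_mul]
  fin_cases i <;> fin_cases j <;>
    (simp [CX01, Matrix.vecHead, Matrix.vecTail]; try exact zp _ _ (by ring))

lemma CX10_mul_Dm (a b c : ℤ) :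
    CX10 * Dm m a b c = Dm m a (a+b+2*c) (-a-c) * CX10 := by
  ext i j
  rw [Dm, Dm, Matrix.mul_diagonal, Matrix.diagonal_mul]
  fin_cases i <;> fin_cases j <;>
    (simp [CX10, Matrix.vecHead, Matrix.vecTail]; try exact zp _ _ (by ring))

lemma Dm_mul_X0 (a b c : ℤ) :
    Dm m a b c * X0 = omega m ^ a • (X0 * Dm m (-a) (b+2*c) (-c)) := by
  rw [X0_eq]
  ext i j
  rw [Dm, Dm]
  simp only [Matrix.smul_apply, Matrix.mul_diagonal, Matrix.diagonal_mul, smul_eq_mul]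
  fin_cases i <;> fin_cases j <;>
    (simp [Matrix.vecHead, Matrix.vecTail, ← zpow_add₀ (omega_ne m)];
     first
      | rfl
      | exact zp _ _ (by ring)
      | exact (mul_inv_cancel₀ (zpow_ne_zero _ (omega_ne m))).symm
      | skip)

lemma Dm_mul_X1 (a b c : ℤ) :
    Dm m a b c * X1 = omega m ^ b • (X1 * Dm m (a+2*c) (-b) (-c)) := by
  rw [X1_eq]
  ext i j
  rw [Dm, Dm]
  simp only [Matrix.smul_apply, Matrix.mul_diagonal, Matrix.diagonal_mul, smul_eq_mul]
  fin_cases i <;> fin_cases j <;>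
    (simp [Matrix.vecHead, Matrix.vecTail, ← zpow_add₀ (omega_ne m)];
     first
      | rfl
      | exact zp _ _ (by ring)
      | exact (mul_inv_cancel₀ (zpow_ne_zero _ (omega_ne m))).symm
      | skip)

end PART2

section PART3
variable {m : ℕ}

/-- The six reduced CX-words. -/
def wmat : Fin 6 → Matrix (Fin 4) (Fin 4) ℂ :=
  ![1, CX01, CX10, CX01 * CX10, CX10 * CX01, SWAPm]

def wOdd : Fin 6 → Bool := ![false, true, true, false, false, true]

def step01L : Fin 6 → Fin 6 := ![1, 0, 3, 2, 5, 4]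
def step10L : Fin 6 → Fin 6 := ![2, 4, 0, 5, 1, 3]

lemma wOdd_step01L (w : Fin 6) : wOdd (step01L w) = !(wOdd w) := by
  fin_cases w <;> rfl

lemma wOdd_step10L (w : Fin 6) : wOdd (step10L w) = !(wOdd w) := by
  fin_cases w <;> rfl

lemma CX01_mul_wmat (w : Fin 6) : CX01 * wmat w = wmat (step01L w) := by
  fin_cases w
  · show CX01 * 1 = CX01
    rw [mul_one]
  · show CX01 * CX01 = 1
    exact CX01_sq
  · rfl
  · show CX01 * (CX01 * CX10) = CX10
    rw [← mul_assoc, CX01_sq, one_mul]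
  · show CX01 * (CX10 * CX01) = SWAPm
    exact CX01_braid
  · show CX01 * SWAPm = CX10 * CX01
    rw [← CX01_braid, ← mul_assoc, CX01_sq, one_mul]

lemma CX10_mul_wmat (w : Fin 6) : CX10 * wmat w = wmat (step10L w) := by
  fin_cases w
  · show CX10 * 1 = CX10
    rw [mul_one]
  · rfl
  · show CX10 * CX10 = 1
    exact CX10_sq
  · show CX10 * (CX01 * CX10) = SWAPm
    exact CX10_braid
  · show CX10 * (CX10 * CX01) = CX01
    rw [← mul_assoc, CX10_sq, one_mul]
  · show CX10 * SWAPm = CX01 * CX10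
    rw [← CX10_braid, ← mul_assoc, CX10_sq, one_mul]

/-- Pushing a diagonal past an X-layer, up to phase. -/
lemma Dm_push (a b e : ℤ) (k k' : ℕ) (hk : k < 2) (hk' : k' < 2) :
    ∃ (ph : ℂ) (a1 b1 e1 : ℤ), ph ≠ 0 ∧
      ∀ M : Matrix (Fin 4) (Fin 4) ℂ,
        Dm m a b e * (X0 ^ k * (X1 ^ k' * M)) =
          ph • (X0 ^ k * (X1 ^ k' * (Dm m a1 b1 e1 * M))) := by
  interval_cases k <;> interval_cases k'
  · exact ⟨1, a, b, e, one_ne_zero, fun M => by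
      simp [one_smul, ← mul_assoc]⟩
  · refine ⟨omega m ^ b, a + 2*e, -b, -e, zpow_ne_zero _ (omega_ne m), fun M => ?_⟩
    simp only [pow_zero, pow_one, one_mul]
    rw [← mul_assoc, Dm_mul_X1, Matrix.smul_mul, mul_assoc]
  · refine ⟨omega m ^ a, -a, b + 2*e, -e, zpow_ne_zero _ (omega_ne m), fun M => ?_⟩
    simp only [pow_zero, pow_one, one_mul]
    rw [← mul_assoc, Dm_mul_X0, Matrix.smul_mul, mul_assoc]
  · refine ⟨omega m ^ a * omega m ^ (b + 2*e), -a+2*(-e), -(b+2*e), -(-e),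
      mul_ne_zero (zpow_ne_zero _ (omega_ne m)) (zpow_ne_zero _ (omega_ne m)), fun M => ?_⟩
    simp only [pow_one]
    rw [← mul_assoc, Dm_mul_X0, Matrix.smul_mul, mul_assoc, ← mul_assoc (Dm m _ _ _),
      Dm_mul_X1]
    simp [pow_one, Matrix.smul_mul, Matrix.mul_smul, smul_smul, mul_assoc]

/-- Pushing a CX gate past an X-layer. -/
lemma CX01_push (k k' : ℕ) (hk : k < 2) (hk' : k' < 2) :
    ∃ k2 k2' : ℕ, k2 < 2 ∧ k2' < 2 ∧
      ∀ M : Matrix (Fin 4) (Fin 4) ℂ,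
        CX01 * (X0 ^ k * (X1 ^ k' * M)) = X0 ^ k2 * (X1 ^ k2' * (CX01 * M)) := by
  interval_cases k <;> interval_cases k'
  · exact ⟨0, 0, by norm_num, by norm_num, fun M => by simp [← mul_assoc]⟩
  · refine ⟨0, 1, by norm_num, by norm_num, fun M => ?_⟩
    simp only [pow_zero, pow_one, one_mul]
    rw [← mul_assoc, CX01_mul_X1, mul_assoc]
  · refine ⟨1, 1, by norm_num, by norm_num, fun M => ?_⟩
    simp only [pow_zero, pow_one, one_mul]
    rw [← mul_assoc, CX01_mul_X0, mul_assoc, mul_assoc]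
  · refine ⟨1, 0, by norm_num, by norm_num, fun M => ?_⟩
    simp only [pow_zero, pow_one, one_mul]
    calc CX01 * (X0 * (X1 * M)) = (CX01 * X0) * (X1 * M) := by rw [mul_assoc]
      _ = X0 * (X1 * (CX01 * (X1 * M))) := by rw [CX01_mul_X0]; simp [mul_assoc]
      _ = X0 * (X1 * ((CX01 * X1) * M)) := by rw [mul_assoc]
      _ = X0 * (X1 * (X1 * (CX01 * M))) := by rw [CX01_mul_X1]; simp [mul_assoc]
      _ = X0 * ((X1 * X1) * (CX01 * M)) := by rw [mul_assoc]
      _ = X0 * (1 * (CX01 * M)) := by rw [X1_sq]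
      _ = X0 * (CX01 * M) := by rw [one_mul]

lemma CX10_push (k k' : ℕ) (hk : k < 2) (hk' : k' < 2) :
    ∃ k2 k2' : ℕ, k2 < 2 ∧ k2' < 2 ∧
      ∀ M : Matrix (Fin 4) (Fin 4) ℂ,
        CX10 * (X0 ^ k * (X1 ^ k' * M)) = X0 ^ k2 * (X1 ^ k2' * (CX10 * M)) := by
  interval_cases k <;> interval_cases k'
  · exact ⟨0, 0, by norm_num, by norm_num, fun M => by simp [← mul_assoc]⟩
  · refine ⟨1, 1, by norm_num, by norm_num, fun M => ?_⟩
    simp only [pow_zero, pow_one, one_mul]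
    rw [← mul_assoc, CX10_mul_X1, mul_assoc, mul_assoc]
  · refine ⟨1, 0, by norm_num, by norm_num, fun M => ?_⟩
    simp only [pow_zero, pow_one, one_mul]
    rw [← mul_assoc, CX10_mul_X0, mul_assoc]
  · refine ⟨0, 1, by norm_num, by norm_num, fun M => ?_⟩
    simp only [pow_zero, pow_one, one_mul]
    calc CX10 * (X0 * (X1 * M)) = (CX10 * X0) * (X1 * M) := by rw [mul_assoc]
      _ = X0 * (CX10 * (X1 * M)) := by rw [CX10_mul_X0]; rw [mul_assoc]
      _ = X0 * ((CX10 * X1) * M) := by rw [mul_assoc]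
      _ = X0 * ((X0 * (X1 * CX10)) * M) := by rw [CX10_mul_X1]
      _ = (X0 * X0) * (X1 * (CX10 * M)) := by simp [mul_assoc]
      _ = X1 * (CX10 * M) := by rw [X0_sq, one_mul]

lemma X0_push (k : ℕ) (hk : k < 2) :
    ∃ k2 : ℕ, k2 < 2 ∧ ∀ M : Matrix (Fin 4) (Fin 4) ℂ,
      X0 * (X0 ^ k * M) = X0 ^ k2 * M := by
  interval_cases k
  · exact ⟨1, by norm_num, fun M => by simp⟩
  · exact ⟨0, by norm_num, fun M => by
      simp only [pow_zero, pow_one, one_mul, ← mul_assoc, X0_sq]⟩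

lemma X1_push (k k' : ℕ) (hk : k < 2) (hk' : k' < 2) :
    ∃ k2' : ℕ, k2' < 2 ∧ ∀ M : Matrix (Fin 4) (Fin 4) ℂ,
      X1 * (X0 ^ k * (X1 ^ k' * M)) = X0 ^ k * (X1 ^ k2' * M) := by
  have hcomm : ∀ (N : Matrix (Fin 4) (Fin 4) ℂ), X1 * (X0 ^ k * N) = X0 ^ k * (X1 * N) := by
    intro N
    interval_cases k
    · simp
    · simp only [pow_one, ← mul_assoc, X1_mul_X0]
  interval_cases k'
  · exact ⟨1, by norm_num, fun M => by rw [hcomm]; simp⟩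
  · refine ⟨0, by norm_num, fun M => ?_⟩
    rw [hcomm]
    simp only [pow_zero, pow_one, one_mul, ← mul_assoc, X1_sq]

end PART3

section PART5NT
variable {m : ℕ}

/-- Reduction of an integer exponent to `[0, n)`. -/
def natRep (n : ℕ) (e : ℤ) : ℕ := (e % (n : ℤ)).toNat

lemma natRep_lt {n : ℕ} (hn : 0 < n) (e : ℤ) : natRep n e < n := by
  have h1 : 0 ≤ e % (n : ℤ) := Int.emod_nonneg e (by exact_mod_cast hn.ne')
  have h2 : e % (n : ℤ) < n := Int.emod_lt_of_pos e (by exact_mod_cast hn)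
  unfold natRep
  omega

lemma natRep_dvd {n : ℕ} (e : ℤ) (hn : 0 < n) : (n : ℤ) ∣ (natRep n e : ℤ) - e := by
  have h1 : 0 ≤ e % (n : ℤ) := Int.emod_nonneg e (by exact_mod_cast hn.ne')
  have h2 : ((natRep n e : ℤ)) = e % (n : ℤ) := by
    unfold natRep
    omega
  rw [h2, Int.emod_def]
  exact ⟨-(e / n), by ring⟩

lemma gcd2_cases (hm : 0 < m) : Nat.gcd m 2 = 1 ∨ Nat.gcd m 2 = 2 :=
  (Nat.dvd_prime Nat.prime_two).mp (Nat.gcd_dvd_right m 2)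

lemma md_pos (hm : 0 < m) : 0 < m / Nat.gcd m 2 :=
  Nat.div_pos (Nat.le_of_dvd hm (Nat.gcd_dvd_left m 2)) (Nat.gcd_pos_of_pos_left 2 hm)

lemma dvd_two_md (hm : 0 < m) : (m : ℤ) ∣ 2 * ((m / Nat.gcd m 2 : ℕ) : ℤ) := by
  rcases gcd2_cases hm with h | h
  · rw [h, Nat.div_one]
    exact ⟨2, by ring⟩
  · have h2 : 2 ∣ m := h ▸ Nat.gcd_dvd_left m 2
    have hh : 2 * (m / 2) = m := Nat.mul_div_cancel' h2
    have hz : (2:ℤ) * ((m/2 : ℕ) : ℤ) = (m : ℤ) := by exact_mod_cast congrArg (Nat.cast : ℕ → ℤ) hh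
    rw [h]
    exact ⟨1, by rw [mul_one, ← hz]⟩

end PART5NT

section PART6
variable {m : ℕ}

lemma DW5 (a b c : ℤ) : Dm m a b c * wmat 5 =
    !![1,0,0,0; 0,0,omega m ^ b,0; 0,omega m ^ a,0,0; 0,0,0,omega m ^ (a+b+2*c)] := by
  show Dm m a b c * SWAPm = _
  ext i j
  rw [Dm, Matrix.diagonal_mul]
  fin_cases i <;> fin_cases j <;>
    simp [SWAPm, Matrix.vecHead, Matrix.vecTail]

lemma M00 (a b c : ℤ) : X0^(0:ℕ) * (X1^(0:ℕ) * (Dm m a b c * wmat 5)) =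
    !![1,0,0,0; 0,0,omega m ^ b,0; 0,omega m ^ a,0,0; 0,0,0,omega m ^ (a+b+2*c)] := by
  rw [pow_zero, pow_zero, one_mul, one_mul, DW5]

lemma M10 (a b c : ℤ) : X0^(1:ℕ) * (X1^(0:ℕ) * (Dm m a b c * wmat 5)) =
    !![0,omega m ^ a,0,0; 0,0,0,omega m ^ (a+b+2*c); 1,0,0,0; 0,0,omega m ^ b,0] := by
  rw [pow_one, pow_zero, one_mul, DW5, X0_eq]
  ext i j
  fin_cases i <;> fin_cases j <;>
    simp [Matrix.mul_apply, Fin.sum_univ_four, Matrix.vecHead, Matrix.vecTail]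

lemma M01 (a b c : ℤ) : X0^(0:ℕ) * (X1^(1:ℕ) * (Dm m a b c * wmat 5)) =
    !![0,0,omega m ^ b,0; 1,0,0,0; 0,0,0,omega m ^ (a+b+2*c); 0,omega m ^ a,0,0] := by
  rw [pow_zero, pow_one, one_mul, DW5, X1_eq]
  ext i j
  fin_cases i <;> fin_cases j <;>
    simp [Matrix.mul_apply, Fin.sum_univ_four, Matrix.vecHead, Matrix.vecTail]

lemma M11 (a b c : ℤ) : X0^(1:ℕ) * (X1^(1:ℕ) * (Dm m a b c * wmat 5)) =
    !![0,0,0,omega m ^ (a+b+2*c); 0,omega m ^ a,0,0; 0,0,omega m ^ b,0; 1,0,0,0] := by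
  have h10 : X0 * (Dm m a b c * wmat 5) =
      !![0,omega m ^ a,0,0; 0,0,0,omega m ^ (a+b+2*c); 1,0,0,0; 0,0,omega m ^ b,0] := by
    simpa using M10 (m := m) a b c
  rw [pow_one, pow_one, ← mul_assoc, ← X1_mul_X0, mul_assoc, h10, X1_eq]
  ext i j
  fin_cases i <;> fin_cases j <;>
    simp [Matrix.mul_apply, Fin.sum_univ_four, Matrix.vecHead, Matrix.vecTail]

lemma col0 (k k' : ℕ) (hk : k < 2) (hk' : k' < 2) (a b c : ℤ) (i : Fin 4) :
    (X0^k * (X1^k' * (Dm m a b c * wmat 5))) i 0 =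
      if (i : ℕ) = 2*k + k' then 1 else 0 := by
  interval_cases k <;> interval_cases k' <;>
    [rw [M00]; rw [M01]; rw [M10]; rw [M11]] <;>
    fin_cases i <;> simp [Matrix.vecHead, Matrix.vecTail]

lemma cancel_left {P M N : Matrix (Fin 4) (Fin 4) ℂ} (hP : P * P = 1)
    (h : P * M = P * N) : M = N := by
  have := congrArg (fun Z => P * Z) h
  simpa [← mul_assoc, hP] using this

lemma cancel_right {P M N : Matrix (Fin 4) (Fin 4) ℂ} (hP : P * P = 1)
    (h : M * P = N * P) : M = N := by
  have := congrArg (fun Z => Z * P) h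
  simpa [mul_assoc, hP] using this

lemma Xpow_sq (k : ℕ) (hk : k < 2) : (X0^k) * (X0^k) = 1 := by
  interval_cases k
  · simp
  · simpa using X0_sq

lemma X1pow_sq (k : ℕ) (hk : k < 2) : (X1^k) * (X1^k) = 1 := by
  interval_cases k
  · simp
  · simpa using X1_sq

lemma m_dvd_two_imp (hm : 0 < m) {z : ℤ} (h : (m:ℤ) ∣ 2 * z) :
    ((m / Nat.gcd m 2 : ℕ) : ℤ) ∣ z := by
  rcases gcd2_cases hm with hg | hg
  · rw [hg, Nat.div_one]
    have hcop : IsCoprime (m:ℤ) 2 := by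
      rw [Int.isCoprime_iff_gcd_eq_one]
      show Int.gcd (m:ℤ) ((2:ℕ):ℤ) = 1
      rw [Int.gcd_natCast_natCast]
      exact hg
    exact IsCoprime.dvd_of_dvd_mul_left hcop h
  · have h2 : 2 ∣ m := hg ▸ Nat.gcd_dvd_left m 2
    have hh : 2 * (m / 2) = m := Nat.mul_div_cancel' h2
    rw [hg]
    obtain ⟨t, ht⟩ := h
    refine ⟨t, ?_⟩
    have hz : (2:ℤ) * ((m/2 : ℕ) : ℤ) = (m : ℤ) := by
      exact_mod_cast congrArg (Nat.cast : ℕ → ℤ) hh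
    have : 2 * z = 2 * (((m/2 : ℕ) : ℤ) * t) := by rw [← mul_assoc, hz, ht]
    linarith

/-- Injectivity of the canonical parameters. -/
lemma inj_core (hm : 0 < m) (k k' l l' l'' k2 k2' l2 l2' l2'' : ℕ)
    (hk : k < 2) (hk' : k' < 2) (hl : l < m) (hl' : l' < m)
    (hl'' : l'' < m / Nat.gcd m 2)
    (hk2 : k2 < 2) (hk2' : k2' < 2) (hl2 : l2 < m) (hl2' : l2' < m)
    (hl2'' : l2'' < m / Nat.gcd m 2) (c : ℂ) (hc : c ≠ 0)
    (h : X0^k * (X1^k' * (Dm m (l+l'') (l'+l'') (-(l'':ℤ)) * wmat 5)) =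
      c • (X0^k2 * (X1^k2' * (Dm m (l2+l2'') (l2'+l2'') (-(l2'':ℤ)) * wmat 5)))) :
    k = k2 ∧ k' = k2' ∧ l = l2 ∧ l' = l2' ∧ l'' = l2'' := by
  -- column 0 pins down k, k' and c = 1
  have hrow := congrFun (congrFun h ⟨2*k+k', by omega⟩) 0
  rw [col0 k k' hk hk', Matrix.smul_apply, col0 k2 k2' hk2 hk2', smul_eq_mul] at hrow
  have hL : ((⟨2*k+k', by omega⟩ : Fin 4) : ℕ) = 2*k+k' := rfl
  rw [hL, if_pos rfl] at hrow
  by_cases hkk : 2*k+k' = 2*k2+k2'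
  · have hkc : k = k2 ∧ k' = k2' := by omega
    rw [if_pos hkk, mul_one] at hrow
    have hc1 : c = 1 := hrow.symm
    subst hc1
    rw [one_smul, hkc.1, hkc.2] at h
    -- cancel invertible factors
    have h2 := cancel_left (Xpow_sq k2 hk2) h
    have h3 := cancel_left (X1pow_sq k2' hk2') h2
    have h4 : Dm m (l+l'') (l'+l'') (-(l'':ℤ)) = Dm m (l2+l2'') (l2'+l2'') (-(l2'':ℤ)) := by
      refine cancel_right (show wmat 5 * wmat 5 = 1 from SWAP_sq) h3
    -- read off diagonal entries
    have e1 := congrFun (congrFun h4 1) 1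
    have e2 := congrFun (congrFun h4 2) 2
    have e3 := congrFun (congrFun h4 3) 3
    rw [Dm, Dm] at e1 e2 e3
    simp [Matrix.diagonal, Matrix.vecHead, Matrix.vecTail] at e1 e2 e3
    rw [omega_zpow_eq_iff hm] at e1 e2 e3
    obtain ⟨t1, ht1⟩ := e1
    obtain ⟨t2, ht2⟩ := e2
    obtain ⟨t3, ht3⟩ := e3
    -- derive m ∣ 2 (l'' - l2'')
    have hdd : (m:ℤ) ∣ 2 * ((l'':ℤ) - (l2'':ℤ)) := by
      refine ⟨t1 + t2 - t3, ?_⟩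
      have expand : (m:ℤ) * (t1 + t2 - t3) = m*t1 + m*t2 - m*t3 := by ring
      push_cast at ht1 ht2 ht3 ⊢
      linarith
    have hmd := m_dvd_two_imp hm hdd
    have hmd0 : 0 < m / Nat.gcd m 2 := md_pos hm
    have h5 : (l'' : ℤ) - l2'' = 0 := by
      refine Int.eq_zero_of_abs_lt_dvd hmd ?_
      rw [abs_lt]
      constructor <;> [push_cast; push_cast] <;> omega
    have hll'' : l'' = l2'' := by omega
    subst hll''
    have h6 : l = l2 := by
      have : (m:ℤ) ∣ (l:ℤ) - l2 := by
        refine ⟨t2, ?_⟩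
        push_cast at ht2 ⊢
        linarith
      have := Int.eq_zero_of_abs_lt_dvd this (by rw [abs_lt]; constructor <;> push_cast <;> omega)
      omega
    have h7 : l' = l2' := by
      have : (m:ℤ) ∣ (l':ℤ) - l2' := by
        refine ⟨t1, ?_⟩
        push_cast at ht1 ⊢
        linarith
      have := Int.eq_zero_of_abs_lt_dvd this (by rw [abs_lt]; constructor <;> push_cast <;> omega)
      omega
    exact ⟨hkc.1, hkc.2, h6, h7, rfl⟩
  · rw [if_neg hkk, mul_zero] at hrow
    exact absurd hrow one_ne_zero

end PART6


/-- Two matrices are phase-equivalent if they differ by a nonzero scalar. -/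
def PhaseEq {α : Type*} (U V : Matrix α α ℂ) : Prop := ∃ c : ℂ, c ≠ 0 ∧ U = c • V

/-- A gate of a two-qubit CX-circuit: X₀, X₁, a power of T₀ or T₁, CX₀₁, or CX₁₀. -/
inductive Gate2X where
  | X0 | X1
  | T0pow (l : ℕ)
  | T1pow (l : ℕ)
  | CX01 | CX10

/-- The matrix of a gate. -/
def Gate2X.toMatrix (m : ℕ) : Gate2X → Matrix (Fin 4) (Fin 4) ℂ
  | .X0 => _root_.X0
  | .X1 => _root_.X1
  | .T0pow l => T0 m ^ l
  | .T1pow l => T1 m ^ l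
  | .CX01 => _root_.CX01
  | .CX10 => _root_.CX10

/-- Whether a gate is a CX gate. -/
def Gate2X.isCX : Gate2X → Bool
  | .CX01 => true
  | .CX10 => true
  | _ => false

/-- The set of 4×4 matrices implementable by a circuit with exactly r CX gates. -/
def F2set (m r : ℕ) : Set (Matrix (Fin 4) (Fin 4) ℂ) :=
  {U | ∃ L : List Gate2X, (L.map (Gate2X.toMatrix m)).prod = U ∧
    L.countP (fun g => g.isCX) = r}

/-- The set of matrices of the displayed form
X₀^k·X₁^k'·T₀^l·T₁^l'·CX₀₁·CX₁₀·T₁^l''·CX₀₁. -/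
def TripleCXForms (m : ℕ) : Set (Matrix (Fin 4) (Fin 4) ℂ) :=
  {V | ∃ k k' l l' l'' : ℕ, k < 2 ∧ k' < 2 ∧ l < m ∧ l' < m ∧ l'' < m / Nat.gcd m 2 ∧
    V = X0 ^ k * X1 ^ k' * T0 m ^ l * T1 m ^ l' * CX01 * CX10 * T1 m ^ l'' * CX01}

section PART4
variable {m : ℕ}

lemma normal_form (L : List Gate2X) :
    ∃ (ph : ℂ) (k k' : ℕ) (a b e : ℤ) (w : Fin 6),
      ph ≠ 0 ∧ k < 2 ∧ k' < 2 ∧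
      (L.map (Gate2X.toMatrix m)).prod = ph • (X0 ^ k * (X1 ^ k' * (Dm m a b e * wmat w))) ∧
      (wOdd w = true ↔ Odd (L.countP fun g => g.isCX)) := by
  induction L with
  | nil =>
      refine ⟨1, 0, 0, 0, 0, 0, 0, one_ne_zero, by norm_num, by norm_num, ?_, by
        simp [wOdd, List.countP_nil, Nat.odd_iff]⟩
      simp [Dm_zero, wmat]
  | cons g L ih =>
      obtain ⟨ph, k, k', a, b, e, w, hph, hk, hk', hprod, hpar⟩ := ih
      rw [List.map_cons, List.prod_cons, hprod]
      have hcount : ∀ (g : Gate2X), g.isCX = false →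
          (List.countP (fun g => g.isCX) (g :: L)) = L.countP (fun g => g.isCX) := by
        intro g hg
        rw [List.countP_cons, hg]
        simp
      cases g with
      | X0 =>
          obtain ⟨k2, hk2, hX⟩ := X0_push k hk
          refine ⟨ph, k2, k', a, b, e, w, hph, hk2, hk', ?_, by rwa [hcount .X0 rfl]⟩
          show X0 * _ = _
          rw [Matrix.mul_smul, hX]
      | X1 =>
          obtain ⟨k2', hk2', hX⟩ := X1_push k k' hk hk'
          refine ⟨ph, k, k2', a, b, e, w, hph, hk, hk2', ?_, by rwa [hcount .X1 rfl]⟩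
          show X1 * _ = _
          rw [Matrix.mul_smul, hX]
      | T0pow l =>
          obtain ⟨ph2, a1, b1, e1, hph2, hD⟩ := Dm_push (m := m) l 0 0 k k' hk hk'
          refine ⟨ph * ph2, k, k', a1 + a, b1 + b, e1 + e, w,
            mul_ne_zero hph hph2, hk, hk', ?_, by rwa [hcount (.T0pow l) rfl]⟩
          show T0 m ^ l * _ = _
          rw [T0_pow, Matrix.mul_smul, hD, ← mul_assoc (Dm m a1 b1 e1), Dm_mul_Dm,
            smul_smul]
      | T1pow l =>
          obtain ⟨ph2, a1, b1, e1, hph2, hD⟩ := Dm_push (m := m) 0 l 0 k k' hk hk'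
          refine ⟨ph * ph2, k, k', a1 + a, b1 + b, e1 + e, w,
            mul_ne_zero hph hph2, hk, hk', ?_, by rwa [hcount (.T1pow l) rfl]⟩
          show T1 m ^ l * _ = _
          rw [T1_pow, Matrix.mul_smul, hD, ← mul_assoc (Dm m a1 b1 e1), Dm_mul_Dm,
            smul_smul]
      | CX01 =>
          obtain ⟨k2, k2', hk2, hk2', hC⟩ := CX01_push k k' hk hk'
          refine ⟨ph, k2, k2', a+b+2*e, b, -b-e, step01L w, hph, hk2, hk2', ?_, ?_⟩
          · show _root_.CX01 * _ = _
            rw [Matrix.mul_smul, hC, ← mul_assoc _root_.CX01, CX01_mul_Dm, mul_assoc,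
              CX01_mul_wmat]
          · have hcnt : List.countP (fun g => g.isCX) (Gate2X.CX01 :: L) =
                List.countP (fun g => g.isCX) L + 1 := by
              rw [List.countP_cons]
              simp [Gate2X.isCX]
            rw [hcnt, Nat.odd_add_one, ← hpar, wOdd_step01L]
            cases h : wOdd w <;> simp [h]
      | CX10 =>
          obtain ⟨k2, k2', hk2, hk2', hC⟩ := CX10_push k k' hk hk'
          refine ⟨ph, k2, k2', a, a+b+2*e, -a-e, step10L w, hph, hk2, hk2', ?_, ?_⟩
          · show _root_.CX10 * _ = _
            rw [Matrix.mul_smul, hC, ← mul_assoc _root_.CX10, CX10_mul_Dm, mul_assoc,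
              CX10_mul_wmat]
          · have hcnt : List.countP (fun g => g.isCX) (Gate2X.CX10 :: L) =
                List.countP (fun g => g.isCX) L + 1 := by
              rw [List.countP_cons]
              simp [Gate2X.isCX]
            rw [hcnt, Nat.odd_add_one, ← hpar, wOdd_step10L]
            cases h : wOdd w <;> simp [h]

end PART4

section PART5G
variable {m : ℕ}

lemma countP_replicate (p : Gate2X → Bool) (a : Gate2X) (n : ℕ) :
    List.countP p (List.replicate n a) = if p a then n else 0 := by
  induction n with
  | zero => simp
  | succ k ih =>
      rw [List.replicate_succ, List.countP_cons, ih]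
      by_cases h : p a <;> simp [h]

lemma prod_reps (k k' : ℕ) (rest : List Gate2X) :
    (((List.replicate k Gate2X.X0 ++ List.replicate k' Gate2X.X1 ++ rest).map
        (Gate2X.toMatrix m)).prod)
      = X0 ^ k * (X1 ^ k' * (rest.map (Gate2X.toMatrix m)).prod) := by
  simp only [List.map_append, List.prod_append, List.map_replicate, List.prod_replicate,
    mul_assoc]
  rfl

lemma countP_reps (k k' : ℕ) (rest : List Gate2X) :
    List.countP (fun g => g.isCX)
        (List.replicate k Gate2X.X0 ++ List.replicate k' Gate2X.X1 ++ rest)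
      = List.countP (fun g => g.isCX) rest := by
  simp [List.countP_append, countP_replicate, Gate2X.isCX]

/-- w = 1 branch: a diagonal times CX01 is a one-CX circuit. -/
lemma branch1 (hm : 0 < m) (k k' : ℕ) (a b e : ℤ) :
    ∃ L' : List Gate2X, L'.countP (fun g => g.isCX) ≤ 1 ∧
      (L'.map (Gate2X.toMatrix m)).prod = X0 ^ k * (X1 ^ k' * (Dm m a b e * wmat 1)) := by
  refine ⟨List.replicate k Gate2X.X0 ++ List.replicate k' Gate2X.X1 ++
    [.T0pow (natRep m (a+e)), .T1pow (natRep m (b+e)), .CX01, .T1pow (natRep m (-e))], ?_, ?_⟩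
  · rw [countP_reps]
    simp [List.countP_cons, Gate2X.isCX]
  · rw [prod_reps]
    congr 1
    congr 1
    show T0 m ^ _ * (T1 m ^ _ * (CX01 * (T1 m ^ _ * 1))) = Dm m a b e * wmat 1
    rw [mul_one, T0_pow, T1_pow, T1_pow, CX01_mul_Dm, ← mul_assoc, ← mul_assoc,
      Dm_mul_Dm, Dm_mul_Dm]
    show _ = Dm m a b e * CX01
    congr 1
    refine Dm_congr ?_ ?_ ?_
    · rw [omega_zpow_eq_iff hm]
      obtain ⟨t1, ht1⟩ := natRep_dvd (a+e) hm
      obtain ⟨t3, ht3⟩ := natRep_dvd (-e) hm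
      exact ⟨t1 + t3, by linarith [ht1, ht3, mul_add (m:ℤ) t1 t3]⟩
    · rw [omega_zpow_eq_iff hm]
      obtain ⟨t2, ht2⟩ := natRep_dvd (b+e) hm
      obtain ⟨t3, ht3⟩ := natRep_dvd (-e) hm
      exact ⟨t2 + t3, by linarith [ht2, ht3, mul_add (m:ℤ) t2 t3]⟩
    · rw [omega_zpow_eq_iff hm]
      obtain ⟨t3, ht3⟩ := natRep_dvd (-e) hm
      exact ⟨-2 * t3, by linarith [ht3, show (m:ℤ) * (-2*t3) = -2*((m:ℤ)*t3) from by ring]⟩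

/-- w = 2 branch: a diagonal times CX10 is a one-CX circuit. -/
lemma branch2 (hm : 0 < m) (k k' : ℕ) (a b e : ℤ) :
    ∃ L' : List Gate2X, L'.countP (fun g => g.isCX) ≤ 1 ∧
      (L'.map (Gate2X.toMatrix m)).prod = X0 ^ k * (X1 ^ k' * (Dm m a b e * wmat 2)) := by
  refine ⟨List.replicate k Gate2X.X0 ++ List.replicate k' Gate2X.X1 ++
    [.T0pow (natRep m (a+e)), .T1pow (natRep m (b+e)), .CX10, .T0pow (natRep m (-e))], ?_, ?_⟩
  · rw [countP_reps]
    simp [List.countP_cons, Gate2X.isCX]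
  · rw [prod_reps]
    congr 1
    congr 1
    show T0 m ^ _ * (T1 m ^ _ * (CX10 * (T0 m ^ _ * 1))) = Dm m a b e * wmat 2
    rw [mul_one, T0_pow, T1_pow, T0_pow, CX10_mul_Dm, ← mul_assoc, ← mul_assoc,
      Dm_mul_Dm, Dm_mul_Dm]
    show _ = Dm m a b e * CX10
    congr 1
    refine Dm_congr ?_ ?_ ?_
    · rw [omega_zpow_eq_iff hm]
      obtain ⟨t1, ht1⟩ := natRep_dvd (a+e) hm
      obtain ⟨t3, ht3⟩ := natRep_dvd (-e) hm
      exact ⟨t1 + t3, by linarith [ht1, ht3, mul_add (m:ℤ) t1 t3]⟩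
    · rw [omega_zpow_eq_iff hm]
      obtain ⟨t2, ht2⟩ := natRep_dvd (b+e) hm
      obtain ⟨t3, ht3⟩ := natRep_dvd (-e) hm
      exact ⟨t2 + t3, by linarith [ht2, ht3, mul_add (m:ℤ) t2 t3]⟩
    · rw [omega_zpow_eq_iff hm]
      obtain ⟨t3, ht3⟩ := natRep_dvd (-e) hm
      exact ⟨-2 * t3, by linarith [ht3, show (m:ℤ) * (-2*t3) = -2*((m:ℤ)*t3) from by ring]⟩

/-- The canonical-form product in normal form. -/
lemma Mform_eq (k k' l l' l'' : ℕ) :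
    X0 ^ k * X1 ^ k' * T0 m ^ l * T1 m ^ l' * CX01 * CX10 * T1 m ^ l'' * CX01
      = X0 ^ k * (X1 ^ k' * (Dm m (l+l'') (l'+l'') (-(l'' : ℤ)) * wmat 5)) := by
  simp only [mul_assoc]
  congr 1
  congr 1
  rw [T0_pow, T1_pow, T1_pow, ← mul_assoc CX10, CX10_mul_Dm, mul_assoc,
    ← mul_assoc CX01, CX01_mul_Dm, mul_assoc, CX01_braid, ← mul_assoc, ← mul_assoc,
    Dm_mul_Dm, Dm_mul_Dm]
  show _ = Dm m _ _ _ * wmat 5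
  congr 1
  exact Dm_congr (zp _ _ (by push_cast; ring)) (zp _ _ (by push_cast; ring))
    (zp _ _ (by push_cast; ring))

end PART5G

lemma phaseEq_refl {α : Type*} (U : Matrix α α ℂ) : PhaseEq U U :=
  ⟨1, one_ne_zero, (one_smul _ _).symm⟩

lemma phaseEq_symm {α : Type*} {U V : Matrix α α ℂ} (h : PhaseEq U V) : PhaseEq V U := by
  obtain ⟨c, hc, h⟩ := h
  exact ⟨c⁻¹, inv_ne_zero hc, by rw [h, smul_smul, inv_mul_cancel₀ hc, one_smul]⟩

lemma phaseEq_trans {α : Type*} {U V W : Matrix α α ℂ} (h1 : PhaseEq U V)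
    (h2 : PhaseEq V W) : PhaseEq U W := by
  obtain ⟨c, hc, h1⟩ := h1
  obtain ⟨d, hd, h2⟩ := h2
  exact ⟨c * d, mul_ne_zero hc hd, by rw [h1, h2, smul_smul]⟩


theorem three_CX_canonical_form (m : ℕ) (hm : 0 < m) :
    (∀ U ∈ F2set m 3,
      (∃ k k' l l' l'' : ℕ, k < 2 ∧ k' < 2 ∧ l < m ∧ l' < m ∧ l'' < m / Nat.gcd m 2 ∧
        PhaseEq U (X0 ^ k * X1 ^ k' * T0 m ^ l * T1 m ^ l' * CX01 * CX10 * T1 m ^ l'' * CX01)) ∨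
      (∃ L' : List Gate2X, L'.countP (fun g => g.isCX) ≤ 1 ∧
        PhaseEq U ((L'.map (Gate2X.toMatrix m)).prod))) ∧
    Nat.card (Quot (fun (U V : TripleCXForms m) => PhaseEq U.1 V.1)) =
      4 * m ^ 3 / Nat.gcd m 2 := by
  constructor
  · rintro U ⟨L, hL, hcnt⟩
    obtain ⟨ph, k, k', a, b, e, w, hph, hk, hk', hprod, hpar⟩ := normal_form (m := m) L
    rw [hL] at hprod
    have hw : wOdd w = true := hpar.mpr (by rw [hcnt]; exact ⟨1, by norm_num⟩)
    fin_cases w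
    · exact absurd hw (by simp [wOdd])
    · obtain ⟨L', hc', he⟩ := branch1 hm k k' a b e
      refine Or.inr ⟨L', hc', ph, hph, ?_⟩
      rw [hprod, he]
      rfl
    · obtain ⟨L', hc', he⟩ := branch2 hm k k' a b e
      refine Or.inr ⟨L', hc', ph, hph, ?_⟩
      rw [hprod, he]
      rfl
    · exact absurd hw (by simp [wOdd])
    · exact absurd hw (by simp [wOdd])
    · -- w = 5 : canonical form
      refine Or.inl ⟨k, k', natRep m (a - (natRep (m / Nat.gcd m 2) (-e) : ℤ)),
        natRep m (b - (natRep (m / Nat.gcd m 2) (-e) : ℤ)), natRep (m / Nat.gcd m 2) (-e),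
        hk, hk', natRep_lt hm _, natRep_lt hm _, natRep_lt (md_pos hm) _, ph, hph, ?_⟩
      have hDm : Dm m a b e =
          Dm m ((natRep m (a - (natRep (m / Nat.gcd m 2) (-e) : ℤ)) : ℤ)
              + (natRep (m / Nat.gcd m 2) (-e) : ℤ))
            ((natRep m (b - (natRep (m / Nat.gcd m 2) (-e) : ℤ)) : ℤ)
              + (natRep (m / Nat.gcd m 2) (-e) : ℤ))
            (-(natRep (m / Nat.gcd m 2) (-e) : ℤ)) := by
        refine Dm_congr ?_ ?_ ?_
        · rw [omega_zpow_eq_iff hm]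
          obtain ⟨t, ht⟩ := natRep_dvd (a - (natRep (m / Nat.gcd m 2) (-e) : ℤ)) hm
          exact ⟨-t, by linarith [ht, show (m:ℤ) * (-t) = -((m:ℤ)*t) from by ring]⟩
        · rw [omega_zpow_eq_iff hm]
          obtain ⟨t, ht⟩ := natRep_dvd (b - (natRep (m / Nat.gcd m 2) (-e) : ℤ)) hm
          exact ⟨-t, by linarith [ht, show (m:ℤ) * (-t) = -((m:ℤ)*t) from by ring]⟩
        · rw [omega_zpow_eq_iff hm]
          obtain ⟨t, ht⟩ := natRep_dvd (n := m / Nat.gcd m 2) (-e) (md_pos hm)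
          obtain ⟨s, hs⟩ := dvd_two_md hm
          refine ⟨s * t, ?_⟩
          rw [show 2*e - 2*(-((natRep (m / Nat.gcd m 2) (-e) : ℕ):ℤ))
              = 2*(((natRep (m / Nat.gcd m 2) (-e) : ℕ):ℤ) - -e) from by ring, ht,
            show (2:ℤ)*((((m / Nat.gcd m 2 : ℕ)):ℤ)*t) = (2*(((m / Nat.gcd m 2 : ℕ)):ℤ))*t
              from by ring, hs]
          ring
      rw [hprod, Mform_eq, ← hDm]
      rfl
  · -- counting
    classical
    have req : Equivalence (fun (U V : TripleCXForms m) => PhaseEq U.1 V.1) :=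
      ⟨fun U => phaseEq_refl _, fun h => phaseEq_symm h, fun h1 h2 => phaseEq_trans h1 h2⟩
    set md := m / Nat.gcd m 2 with hmddef
    let F : Fin 2 × Fin 2 × Fin m × Fin m × Fin md → Matrix (Fin 4) (Fin 4) ℂ :=
      fun p => X0 ^ (p.1 : ℕ) * X1 ^ (p.2.1 : ℕ) * T0 m ^ (p.2.2.1 : ℕ) *
        T1 m ^ (p.2.2.2.1 : ℕ) * CX01 * CX10 * T1 m ^ (p.2.2.2.2 : ℕ) * CX01
    have hFmem : ∀ p, F p ∈ TripleCXForms m := by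
      intro p
      exact ⟨p.1, p.2.1, p.2.2.1, p.2.2.2.1, p.2.2.2.2, p.1.is_lt, p.2.1.is_lt,
        p.2.2.1.is_lt, p.2.2.2.1.is_lt, p.2.2.2.2.is_lt, rfl⟩
    let f : Fin 2 × Fin 2 × Fin m × Fin m × Fin md →
        Quot (fun (U V : TripleCXForms m) => PhaseEq U.1 V.1) :=
      fun p => Quot.mk _ ⟨F p, hFmem p⟩
    have hbij : Function.Bijective f := by
      constructor
      · rintro ⟨pk, pk', pl, pl', pl''⟩ ⟨qk, qk', ql, ql', ql''⟩ hpq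
        have hEq := Quot.eqvGen_exact hpq
        rw [req.eqvGen_iff] at hEq
        obtain ⟨c, hc, hc2⟩ := hEq
        simp only [F] at hc2
        rw [Mform_eq, Mform_eq] at hc2
        obtain ⟨e1, e2, e3, e4, e5⟩ := inj_core hm _ _ _ _ _ _ _ _ _ _
          pk.is_lt pk'.is_lt pl.is_lt pl'.is_lt pl''.is_lt
          qk.is_lt qk'.is_lt ql.is_lt ql'.is_lt ql''.is_lt c hc hc2
        simp only [Prod.mk.injEq]
        exact ⟨Fin.ext e1, Fin.ext e2, Fin.ext e3, Fin.ext e4, Fin.ext e5⟩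
      · intro x
        induction x using Quot.ind with
        | _ V =>
          obtain ⟨V, hV⟩ := V
          obtain ⟨k, k', l, l', l'', hk, hk', hl, hl', hl'', hVeq⟩ := hV
          refine ⟨(⟨k, hk⟩, ⟨k', hk'⟩, ⟨l, hl⟩, ⟨l', hl'⟩, ⟨l'', hl''⟩), ?_⟩
          exact congrArg _ (Subtype.ext hVeq.symm)
    have hcard := Nat.card_eq_of_bijective f hbij
    rw [← hcard]
    have hfin : Nat.card (Fin 2 × Fin 2 × Fin m × Fin m × Fin md) = 2*(2*(m*(m*md))) := by
      simp [Nat.card_eq_fintype_card]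
    rw [hfin, hmddef]
    have h1 : Nat.gcd m 2 ∣ m := Nat.gcd_dvd_left m 2
    rw [show 4 * m ^ 3 = (4*m*m) * m from by ring, Nat.mul_div_assoc _ h1]
    ring



end
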